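/- Let U = ℂ \ {μ ∈ ℂ : μ² ∈ [1/4, ∞)}. For all μ ∈ U, the function z₋(μ) = (1 - √(1-4μ²))/(2μ) (with z₋(0) = 0) satisfies |z₋(μ)| < 1. -/

import Mathlib

open Complex

/-- The branch `z₋(μ) = (1 - √(1-4μ²))/(2μ)`, with the principal square root,
extended by `z₋(0) = 0`. -/
noncomputable def zminus (μ : ℂ) : ℂ :=
  if μ = 0 then 0 else (1 - (1 - 4 * μ ^ 2) ^ ((1 : ℂ) / 2)) / (2 * μ)

theorem stmt_7 (U : Set ℂ) (hU : U = {μ : ℂ | ¬ ∃ t : ℝ, (1/4 : ℝ) ≤ t ∧ μ ^ 2 = (t : ℂ)}) :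
    ∀ μ ∈ U, ‖zminus μ‖ < 1 := by
  intro μ hμ
  subst hU
  simp only [Set.mem_setOf_eq] at hμ
  by_cases hμ0 : μ = 0
  · simp [zminus, hμ0]
  set w : ℂ := 1 - 4 * μ ^ 2 with hw
  -- w is not a nonpositive real
  have hnotneg : ¬ (w.re ≤ 0 ∧ w.im = 0) := by
    rintro ⟨h1, h2⟩
    apply hμ
    refine ⟨(1 - w.re) / 4, by linarith, ?_⟩
    have hwre : w = (w.re : ℂ) := by
      apply Complex.ext <;> simp [h2]
    have : 4 * μ ^ 2 = 1 - (w.re : ℂ) := by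
      rw [← hwre]; rw [hw]; ring
    push_cast
    linear_combination this / 4
  have hw0 : w ≠ 0 := by
    intro h
    exact hnotneg ⟨by simp [h], by simp [h]⟩
  -- argument of w is strictly inside (-π, π)
  have harg_lt : Complex.arg w < Real.pi := by
    rcases lt_or_eq_of_le (Complex.arg_le_pi w) with h | h
    · exact h
    · exfalso
      rw [Complex.arg_eq_pi_iff] at h
      exact hnotneg ⟨le_of_lt h.1, h.2⟩
  have harg_gt : -Real.pi < Complex.arg w := Complex.neg_pi_lt_arg w
  set s : ℂ := w ^ ((1 : ℂ) / 2) with hs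
  -- Re s > 0
  have hre : 0 < s.re := by
    rw [hs, Complex.cpow_def_of_ne_zero hw0]
    rw [Complex.exp_re]
    apply mul_pos (Real.exp_pos _)
    have him : (Complex.log w * (1 / 2)).im = Complex.arg w / 2 := by
      simp [Complex.mul_im, Complex.log_im]
      ring
    rw [him]
    apply Real.cos_pos_of_mem_Ioo
    constructor <;> [linarith; linarith]
  have hs2 : s ^ 2 = w := by
    have : ((1 : ℂ) / 2) = ((2 : ℕ) : ℂ)⁻¹ := by norm_num
    rw [hs, this]
    exact Complex.cpow_nat_inv_pow w (by norm_num)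
  have hprod : (1 - s) * (1 + s) = 4 * μ ^ 2 := by
    linear_combination -hs2 - hw
  -- abs relation
  have habs : ‖1 - s‖ * ‖1 + s‖ = (2 * ‖μ‖) ^ 2 := by
    rw [← norm_mul, hprod]
    rw [show (4 : ℂ) * μ ^ 2 = (2 * μ) ^ 2 by ring]
    rw [norm_pow, norm_mul]
    simp
  have hlt : ‖1 - s‖ < ‖1 + s‖ := by
    have h1 : (‖1 - s‖) ^ 2 < (‖1 + s‖) ^ 2 := by
      rw [Complex.sq_norm, Complex.sq_norm, Complex.normSq_apply, Complex.normSq_apply]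
      simp only [Complex.sub_re, Complex.sub_im, Complex.add_re, Complex.add_im,
        Complex.one_re, Complex.one_im]
      nlinarith [sq_nonneg s.im]
    exact lt_of_pow_lt_pow_left₀ 2 (norm_nonneg _) h1
  -- conclude
  have hμabs : 0 < ‖μ‖ := by
    simpa [norm_pos_iff] using hμ0
  have hzm : zminus μ = (1 - s) / (2 * μ) := by
    rw [zminus, if_neg hμ0]
  rw [hzm, norm_div, norm_mul, Complex.norm_two]
  rw [div_lt_one (by positivity)]
  nlinarith [norm_nonneg (1 - s), norm_nonneg (1 + s)]
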